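/- Let K be a field of characteristic ≠ 2 and f ∈ K* a non-square, σ = [[0,f],[1,0]] ∈ PGL(2,K). The normalizer N_σ of ⟨σ⟩ decomposes as a semidirect product N_σ ≅ N°_σ ⋊ ℤ/2ℤ, where ℤ/2ℤ is generated by the class of the diagonal involution diag(1, −1), and conjugation by diag(1,−1) sends the class of [[a, bf],[b, a]] to the class of [[a, −bf],[−b, a]]. -/

import Mathlib

open Matrix

/-- `PGL(2, K)`, the quotient of `GL(2, K)` by its centre (the scalar matrices). -/
abbrev PGL2 (K : Type*) [Field K] : Type _ :=
  GL (Fin 2) K ⧸ Subgroup.center (GL (Fin 2) K)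

/-- The class in `PGL(2, K)` of a matrix with non-zero determinant. -/
noncomputable def pgl2 {K : Type*} [Field K] (M : Matrix (Fin 2) (Fin 2) K)
    (h : M.det ≠ 0) : PGL2 K :=
  QuotientGroup.mk (Matrix.GeneralLinearGroup.mkOfDetNeZero M h)

/-- The class of `[[0, f], [1, 0]]` in `PGL(2, K)`. -/
noncomputable def sigmaPGL {K : Type*} [Field K] (f : Kˣ) : PGL2 K :=
  pgl2 !![0, (f : K); 1, 0] (by simp [Matrix.det_fin_two_of])
/-- The class of the diagonal involution `diag(1, -1)` in `PGL(2, K)`. -/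
noncomputable def diagInv (K : Type*) [Field K] : PGL2 K :=
  pgl2 !![(1 : K), 0; 0, -1] (by norm_num [Matrix.det_fin_two_of])

namespace NormSemi

variable {K : Type*} [Field K]

lemma scalar_mem_center (c : K) (u : GL (Fin 2) K)
    (hu : (u : Matrix (Fin 2) (Fin 2) K) = c • 1) :
    u ∈ Subgroup.center (GL (Fin 2) K) := by
  rw [Subgroup.mem_center_iff]
  intro g
  apply Units.ext
  show (g : Matrix (Fin 2) (Fin 2) K) * u = u * g
  rw [hu, smul_mul_assoc, mul_smul_comm, one_mul, mul_one]

lemma center_is_scalar (u : GL (Fin 2) K) (hu : u ∈ Subgroup.center (GL (Fin 2) K)) :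
    ∃ c : K, c ≠ 0 ∧ (u : Matrix (Fin 2) (Fin 2) K) = c • 1 := by
  rw [Subgroup.mem_center_iff] at hu
  set E : GL (Fin 2) K := Matrix.GeneralLinearGroup.mkOfDetNeZero !![(1:K),1;0,1]
    (by simp [Matrix.det_fin_two_of]) with hE
  set F : GL (Fin 2) K := Matrix.GeneralLinearGroup.mkOfDetNeZero !![(1:K),0;1,1]
    (by simp [Matrix.det_fin_two_of]) with hF
  have h1 : (E : Matrix (Fin 2) (Fin 2) K) * u = (u : Matrix (Fin 2) (Fin 2) K) * E :=
    congrArg Units.val (hu E)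
  have h2 : (F : Matrix (Fin 2) (Fin 2) K) * u = (u : Matrix (Fin 2) (Fin 2) K) * F :=
    congrArg Units.val (hu F)
  have hEv : (E : Matrix (Fin 2) (Fin 2) K) = !![(1:K),1;0,1] := rfl
  have hFv : (F : Matrix (Fin 2) (Fin 2) K) = !![(1:K),0;1,1] := rfl
  set M := (u : Matrix (Fin 2) (Fin 2) K) with hM
  have e10 : M 1 0 = 0 := by
    have := congrFun (congrFun h1 0) 0
    simp [hEv, Matrix.mul_apply, Fin.sum_univ_two] at this
    linear_combination this
  have e01 : M 0 1 = 0 := by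
    have := congrFun (congrFun h2 0) 0
    simp [hFv, Matrix.mul_apply, Fin.sum_univ_two] at this
    linear_combination this
  have e00 : M 0 0 = M 1 1 := by
    have := congrFun (congrFun h1 0) 1
    simp [hEv, Matrix.mul_apply, Fin.sum_univ_two, e01] at this
    exact this.symm
  refine ⟨M 0 0, ?_, ?_⟩
  · intro h0
    have hdet : M.det = 0 := by
      rw [Matrix.det_fin_two, e01, e00, ← e00, h0]; ring
    have : IsUnit M.det := (Matrix.isUnit_iff_isUnit_det M).mp u.isUnit
    rw [hdet] at this
    exact this.ne_zero rfl
  · ext i j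
    fin_cases i <;> fin_cases j <;>
      simp [Matrix.one_apply, e01, e10, ← e00]

lemma mk_eq_mk_iff (g g' : GL (Fin 2) K) :
    (QuotientGroup.mk g : PGL2 K) = QuotientGroup.mk g' ↔
      ∃ c : K, (g' : Matrix (Fin 2) (Fin 2) K) = c • (g : Matrix (Fin 2) (Fin 2) K) := by
  rw [QuotientGroup.eq]
  constructor
  · intro h
    obtain ⟨c, -, hc⟩ := center_is_scalar _ h
    refine ⟨c, ?_⟩
    have key : (g : Matrix (Fin 2) (Fin 2) K) *
        ((g⁻¹ * g' : GL (Fin 2) K) : Matrix (Fin 2) (Fin 2) K)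
        = (g' : Matrix (Fin 2) (Fin 2) K) := by
      have hginv : (g : Matrix (Fin 2) (Fin 2) K) *
          ((g⁻¹ : GL (Fin 2) K) : Matrix (Fin 2) (Fin 2) K) = 1 :=
        congrArg Units.val (mul_inv_cancel g)
      rw [show ((g⁻¹ * g' : GL (Fin 2) K) : Matrix (Fin 2) (Fin 2) K)
          = (g⁻¹ : GL (Fin 2) K) * (g' : GL (Fin 2) K) from rfl, ← mul_assoc, hginv, one_mul]
    rw [hc] at key
    rw [← key, mul_smul_comm, mul_one]
  · rintro ⟨c, hc⟩
    have hc0 : c ≠ 0 := by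
      intro h
      apply ((Matrix.isUnit_iff_isUnit_det _).mp g'.isUnit).ne_zero
      have hz : (g' : Matrix (Fin 2) (Fin 2) K) = 0 := by rw [hc, h, zero_smul]
      rw [hz]; simp
    apply scalar_mem_center c
    show ((g⁻¹ : GL (Fin 2) K) : Matrix (Fin 2) (Fin 2) K) * g' = c • 1
    rw [hc, mul_smul_comm]
    congr 1
    exact congrArg Units.val (inv_mul_cancel g)

lemma commute_mem_normalizer {G : Type*} [Group G] {x s : G} (h : x * s = s * x) :
    x ∈ Subgroup.normalizer (Subgroup.zpowers s) := by
  rw [Subgroup.mem_normalizer_iff]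
  intro g
  have key : ∀ n : ℤ, x * s ^ n * x⁻¹ = s ^ n := fun n => by
    rw [mul_inv_eq_iff_eq_mul]
    exact Commute.zpow_right h n
  constructor
  · rintro ⟨n, rfl⟩; exact ⟨n, (key n).symm⟩
  · rintro ⟨n, hn⟩
    refine ⟨n, ?_⟩
    have h2 : x * s ^ n * x⁻¹ = x * g * x⁻¹ := by rw [key n]; exact hn
    exact mul_left_cancel (mul_right_cancel h2)

/-- The subgroup `N°_σ` of `PGL(2,K)`. -/
noncomputable def Hgrp (K : Type*) [Field K] (f : Kˣ) : Subgroup (PGL2 K) where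
  carrier := {x : PGL2 K | ∃ (g : GL (Fin 2) K) (a b : K),
      (QuotientGroup.mk g : PGL2 K) = x ∧
      (g : Matrix (Fin 2) (Fin 2) K) = !![a, b * f; b, a]}
  one_mem' := by
    refine ⟨1, 1, 0, rfl, ?_⟩
    show (1 : Matrix (Fin 2) (Fin 2) K) = _
    ext i j
    fin_cases i <;> fin_cases j <;> simp [Matrix.one_apply]
  mul_mem' := by
    rintro x y ⟨g1, a, b, rfl, hg1⟩ ⟨g2, a2, b2, rfl, hg2⟩
    refine ⟨g1 * g2, a * a2 + b * b2 * f, a * b2 + b * a2, rfl, ?_⟩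
    show (g1 : Matrix (Fin 2) (Fin 2) K) * g2 = _
    rw [hg1, hg2]
    ext i j
    fin_cases i <;> fin_cases j <;>
      simp [Matrix.mul_apply, Fin.sum_univ_two] <;> ring
  inv_mem' := by
    rintro x ⟨g, a, b, rfl, hg⟩
    have hdet : (a * a - b * f * b) ≠ 0 := by
      have := (Matrix.isUnit_iff_isUnit_det _).mp g.isUnit
      rw [hg, Matrix.det_fin_two_of] at this
      intro h0
      rw [show a * a - b * (f : K) * b = a * a - b * f * b from rfl] at h0
      apply this.ne_zero
      linear_combination h0
    refine ⟨g⁻¹, (a * a - b * f * b)⁻¹ * a, (a * a - b * f * b)⁻¹ * -b,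
      rfl, ?_⟩
    have hcoe : ((g⁻¹ : GL (Fin 2) K) : Matrix (Fin 2) (Fin 2) K)
        = ((g : Matrix (Fin 2) (Fin 2) K))⁻¹ := Matrix.coe_units_inv g
    rw [hcoe, hg]
    have hdet2 : a ^ 2 - b ^ 2 * (f : K) ≠ 0 := by intro h0; apply hdet; linear_combination h0
    have hdet3 : -(b ^ 2 * (f : K)) + a ^ 2 ≠ 0 := by intro h0; apply hdet; linear_combination h0
    apply Matrix.inv_eq_right_inv
    ext i j
    fin_cases i <;> fin_cases j <;>
      simp [Matrix.mul_apply, Fin.sum_univ_two, Matrix.one_apply] <;>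
      field_simp <;> ring

end NormSemi

open NormSemi

/-- for a non-square `f ∈ K*` (char K ≠ 2) and
`σ = [[0, f], [1, 0]]`, the normalizer `N_σ` of `⟨σ⟩` is the (internal)
semidirect product `N°_σ ⋊ ℤ/2ℤ` where `N°_σ` is the subgroup of classes of
matrices `[[a, bf], [b, a]]` and `ℤ/2ℤ` is generated by the class `d` of
`diag(1, -1)`; conjugation by `d` sends `[[a, bf], [b, a]]` to
`[[a, -bf], [-b, a]]`. -/

theorem normalizer_semidirect {K : Type*} [Field K] (h2 : (2 : K) ≠ 0)
    (f : Kˣ) (hf : ¬ IsSquare f) :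
    ∃ H : Subgroup (PGL2 K),
      (∀ x : PGL2 K, x ∈ H ↔
        ∃ (g : GL (Fin 2) K) (a b : K),
          (QuotientGroup.mk g : PGL2 K) = x ∧
          (g : Matrix (Fin 2) (Fin 2) K) = !![a, b * f; b, a]) ∧
      H ≤ Subgroup.normalizer (Subgroup.zpowers (sigmaPGL f)) ∧
      diagInv K ∈ Subgroup.normalizer (Subgroup.zpowers (sigmaPGL f)) ∧
      diagInv K * diagInv K = 1 ∧
      diagInv K ∉ H ∧
      -- every element of the normalizer decomposes (uniquely, by the two previous
      -- facts) as an element of `N°_σ` times a power of `d`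
      (∀ x ∈ Subgroup.normalizer (Subgroup.zpowers (sigmaPGL f)),
        x ∈ H ∨ x * diagInv K ∈ H) ∧
      -- the action of `ℤ/2ℤ` on `N°_σ`
      (∀ (g g' : GL (Fin 2) K) (a b : K),
        (g : Matrix (Fin 2) (Fin 2) K) = !![a, b * f; b, a] →
        (g' : Matrix (Fin 2) (Fin 2) K) = !![a, -(b * f); -b, a] →
        diagInv K * (QuotientGroup.mk g : PGL2 K) * (diagInv K)⁻¹ =
          QuotientGroup.mk g') := by
  classical
  set S : GL (Fin 2) K := Matrix.GeneralLinearGroup.mkOfDetNeZero !![0, (f : K); 1, 0]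
    (by simp [Matrix.det_fin_two_of]) with hSdef
  set D : GL (Fin 2) K := Matrix.GeneralLinearGroup.mkOfDetNeZero !![(1 : K), 0; 0, -1]
    (by norm_num [Matrix.det_fin_two_of]) with hDdef
  have hSv : (S : Matrix (Fin 2) (Fin 2) K) = !![0, (f : K); 1, 0] := rfl
  have hDv : (D : Matrix (Fin 2) (Fin 2) K) = !![(1 : K), 0; 0, -1] := rfl
  have hSmk : sigmaPGL f = QuotientGroup.mk S := rfl
  have hDmk : diagInv K = QuotientGroup.mk D := rfl
  -- d * d = 1
  have hDD : diagInv K * diagInv K = 1 := by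
    rw [hDmk, ← QuotientGroup.mk_mul]
    have : D * D = 1 := by
      apply Units.ext
      show (D : Matrix (Fin 2) (Fin 2) K) * D = 1
      rw [hDv]
      ext i j
      fin_cases i <;> fin_cases j <;> simp [Matrix.mul_apply, Fin.sum_univ_two, Matrix.one_apply]
    rw [this, QuotientGroup.mk_one]
  have hDinv : (diagInv K)⁻¹ = diagInv K := inv_eq_of_mul_eq_one_right hDD
  -- sigma is not 1
  have hσ1 : sigmaPGL f ≠ 1 := by
    rw [hSmk]
    intro h
    obtain ⟨c, -, hc⟩ := center_is_scalar S ((QuotientGroup.eq_one_iff S).mp h)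
    have := congrFun (congrFun hc 1) 0
    rw [hSv] at this
    simp [Matrix.one_apply] at this
  -- sigma squared is 1
  have hσσ : sigmaPGL f * sigmaPGL f = 1 := by
    rw [hSmk, ← QuotientGroup.mk_mul, QuotientGroup.eq_one_iff]
    apply scalar_mem_center (f : K)
    show (S : Matrix (Fin 2) (Fin 2) K) * S = _
    rw [hSv]
    ext i j
    fin_cases i <;> fin_cases j <;> simp [Matrix.mul_apply, Fin.sum_univ_two, Matrix.one_apply]
  refine ⟨Hgrp K f, fun x => Iff.rfl, ?_, ?_, hDD, ?_, ?_, ?_⟩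
  · -- H ≤ normalizer
    rintro x ⟨g, a, b, rfl, hg⟩
    apply commute_mem_normalizer
    rw [hSmk, ← QuotientGroup.mk_mul, ← QuotientGroup.mk_mul]
    apply (mk_eq_mk_iff _ _).mpr ⟨1, ?_⟩
    show (S : Matrix (Fin 2) (Fin 2) K) * g
        = (1 : K) • ((g : Matrix (Fin 2) (Fin 2) K) * S)
    rw [hSv, hg, one_smul]
    ext i j
    fin_cases i <;> fin_cases j <;>
      simp [Matrix.mul_apply, Fin.sum_univ_two] <;> ring
  · -- diagInv ∈ normalizer
    apply commute_mem_normalizer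
    rw [hSmk, hDmk, ← QuotientGroup.mk_mul, ← QuotientGroup.mk_mul]
    apply (mk_eq_mk_iff _ _).mpr ⟨-1, ?_⟩
    show (S : Matrix (Fin 2) (Fin 2) K) * D
        = (-1 : K) • ((D : Matrix (Fin 2) (Fin 2) K) * S)
    rw [hSv, hDv]
    ext i j
    fin_cases i <;> fin_cases j <;>
      simp [Matrix.mul_apply, Fin.sum_univ_two] <;> ring
  · -- diagInv ∉ H
    rintro ⟨g, a, b, hmk, hg⟩
    rw [hDmk] at hmk
    obtain ⟨c, hc⟩ := (mk_eq_mk_iff g D).mp hmk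
    rw [hDv, hg] at hc
    have e00 := congrFun (congrFun hc 0) 0
    have e11 := congrFun (congrFun hc 1) 1
    simp [Matrix.smul_apply] at e00 e11
    apply h2
    linear_combination e00 - e11
  · -- decomposition
    intro x hx
    obtain ⟨g, rfl⟩ := QuotientGroup.mk_surjective x
    obtain ⟨n, hn⟩ := (Subgroup.mem_normalizer_iff.mp hx (sigmaPGL f)).mp ⟨1, zpow_one _⟩
    have hconj : (QuotientGroup.mk g : PGL2 K) * sigmaPGL f
        = sigmaPGL f * (QuotientGroup.mk g : PGL2 K) := by
      rcases Int.even_or_odd n with ⟨k, hk⟩ | ⟨k, hk⟩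
      · exfalso
        apply hσ1
        have h1 : (sigmaPGL f) ^ n = 1 := by
          rw [hk, ← two_mul, _root_.zpow_mul, zpow_two, hσσ, _root_.one_zpow]
        have h3 : (sigmaPGL f) ^ n = (QuotientGroup.mk g : PGL2 K) * sigmaPGL f
            * (QuotientGroup.mk g : PGL2 K)⁻¹ := hn
        rw [h1] at h3
        replace h3 := h3.symm
        have h4 := congrArg (fun y => (QuotientGroup.mk g : PGL2 K)⁻¹ * y
          * (QuotientGroup.mk g : PGL2 K)) h3
        simpa [mul_assoc] using h4
      · have h1 : (sigmaPGL f) ^ n = sigmaPGL f := by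
          rw [hk, _root_.zpow_add, zpow_one, _root_.zpow_mul, zpow_two, hσσ, _root_.one_zpow, one_mul]
        have h3 : (sigmaPGL f) ^ n = (QuotientGroup.mk g : PGL2 K) * sigmaPGL f
            * (QuotientGroup.mk g : PGL2 K)⁻¹ := hn
        rw [h1] at h3
        exact (eq_mul_inv_iff_mul_eq.mp h3).symm
    have hcm : (QuotientGroup.mk (g * S) : PGL2 K) = QuotientGroup.mk (S * g) := by
      show (QuotientGroup.mk g * QuotientGroup.mk S : PGL2 K)
        = QuotientGroup.mk S * QuotientGroup.mk g
      rw [← hSmk]; exact hconj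
    obtain ⟨c, hc⟩ := (mk_eq_mk_iff (g * S) (S * g)).mp hcm
    set gv := (g : Matrix (Fin 2) (Fin 2) K) with hgv
    have hc' : (S : Matrix (Fin 2) (Fin 2) K) * gv
        = c • (gv * (S : Matrix (Fin 2) (Fin 2) K)) := hc
    have hdg : gv.det ≠ 0 := ((Matrix.isUnit_iff_isUnit_det _).mp g.isUnit).ne_zero
    have hdS : ((S : Matrix (Fin 2) (Fin 2) K)).det ≠ 0 := by
      rw [hSv, Matrix.det_fin_two_of]
      simpa using f.ne_zero
    have hc2 : c * c = 1 := by
      have hdet := congrArg Matrix.det hc'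
      rw [Matrix.det_mul, Matrix.det_smul, Matrix.det_mul] at hdet
      simp only [Fintype.card_fin] at hdet
      have h0 : (c * c - 1) * (gv.det * ((S : Matrix (Fin 2) (Fin 2) K)).det) = 0 := by
        linear_combination -hdet
      rcases mul_eq_zero.mp h0 with h0 | h0
      · linear_combination h0
      · exact absurd h0 (mul_ne_zero hdg hdS)
    have e10 : gv 0 0 = c * gv 1 1 := by
      have := congrFun (congrFun hc' 1) 0
      simp [hSv, Matrix.mul_apply, Fin.sum_univ_two, Matrix.smul_apply] at this
      linear_combination this
    have e11 : gv 0 1 = c * (gv 1 0 * f) := by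
      have := congrFun (congrFun hc' 1) 1
      simp [hSv, Matrix.mul_apply, Fin.sum_univ_two, Matrix.smul_apply] at this
      linear_combination this
    rcases mul_self_eq_one_iff.mp hc2 with h1 | h1
    · subst h1
      refine Or.inl ⟨g, gv 0 0, gv 1 0, rfl, ?_⟩
      ext i j
      fin_cases i <;> fin_cases j <;>
        simp [← hgv] <;> first | linear_combination e11 | linear_combination -e10
    · subst h1
      refine Or.inr ⟨g * D, gv 0 0, gv 1 0, by rw [hDmk]; rfl, ?_⟩
      show gv * (D : Matrix (Fin 2) (Fin 2) K) = _
      rw [hDv]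
      ext i j
      fin_cases i <;> fin_cases j <;>
        simp [Matrix.mul_apply, Fin.sum_univ_two, ← hgv] <;>
        first | linear_combination e11 | linear_combination e10 | linear_combination -e11 | linear_combination -e10
  · -- conjugation action
    intro g g' a b hg hg'
    rw [hDinv, hDmk, ← QuotientGroup.mk_mul, ← QuotientGroup.mk_mul]
    apply ((mk_eq_mk_iff _ _).mpr ⟨1, ?_⟩)
    show (g' : Matrix (Fin 2) (Fin 2) K)
        = (1:K) • ((D : Matrix (Fin 2) (Fin 2) K) * g * D)
    rw [hDv, hg, hg', one_smul]
    ext i j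
    fin_cases i <;> fin_cases j <;>
      simp [Matrix.mul_apply, Fin.sum_univ_two] <;> ring
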